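/- arXiv:1709.10158 — 3 statements merged into one kernel-verified Lean document; each statement's English description precedes it below -/
import Mathlib

section
/- Let W be a ℂ-vector space and φ an invertible ℂ-linear endomorphism of W such that g(φ) = 0 for some nonzero polynomial g ∈ ℂ[X]. Then there exists a unique pair (T_s, T_u) of ℂ-linear endomorphisms of W such that: T_s ∘ T_u = T_u ∘ T_s = φ; T_s is semisimple (every T_s-invariant subspace of W has a T_s-invariant complement); and T_u is unipotent (T_u − id_W is nilpotent). Moreover T_s and T_u are invertible and can be taken to be polynomial expressions in φ. (This is the Jordan–Chevalley decomposition of φ.) -/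
open Polynomial

lemma aux_inv_poly {A : Type*} [Ring A] [Algebra ℂ A] [Nontrivial A] {S : A}
    (hint : IsIntegral ℂ S) (hu : IsUnit S) :
    ∃ r : ℂ[X], S * aeval S r = 1 ∧ aeval S r * S = 1 := by
  set q := minpoly ℂ S with hqdef
  have hqmon : q.Monic := minpoly.monic hint
  have hq0 : aeval S q = 0 := minpoly.aeval ℂ S
  have hqne : q ≠ 0 := hqmon.ne_zero
  have hkey : S * aeval S q.divX + algebraMap ℂ A (q.coeff 0) = 0 := by
    have := congrArg (aeval S) (Polynomial.X_mul_divX_add (p := q))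
    rwa [map_add, map_mul, aeval_X, aeval_C, hq0] at this
  have hc : q.coeff 0 ≠ 0 := by
    intro hc0
    have hdvx : q.divX ≠ 0 := by
      intro h
      have h2 := Polynomial.X_mul_divX_add (p := q)
      rw [h, mul_zero, zero_add, hc0, map_zero] at h2
      exact hqne h2.symm
    have key : S * aeval S q.divX = 0 := by
      rw [hc0, map_zero, add_zero] at hkey; exact hkey
    have hz : aeval S q.divX = 0 := by
      obtain ⟨u, hu'⟩ := hu
      calc aeval S q.divX = (↑u⁻¹ * S) * aeval S q.divX := by
            rw [← hu', u.inv_mul, one_mul]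
        _ = ↑u⁻¹ * (S * aeval S q.divX) := by rw [mul_assoc]
        _ = 0 := by rw [key, mul_zero]
    have hdeg := minpoly.degree_le_of_ne_zero ℂ S hdvx hz
    exact absurd hdeg (not_le.mpr (Polynomial.degree_divX_lt hqne))
  refine ⟨-(C (q.coeff 0)⁻¹ * q.divX), ?_, ?_⟩
  · have h1 : S * aeval S q.divX = -(algebraMap ℂ A (q.coeff 0)) :=
      eq_neg_of_add_eq_zero_left hkey
    rw [map_neg, map_mul, aeval_C, mul_neg, neg_eq_iff_eq_neg]
    calc S * (algebraMap ℂ A (q.coeff 0)⁻¹ * aeval S q.divX)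
        = algebraMap ℂ A (q.coeff 0)⁻¹ * (S * aeval S q.divX) := by
          rw [← mul_assoc, ← Algebra.commutes, mul_assoc]
      _ = -(algebraMap ℂ A (q.coeff 0)⁻¹ * algebraMap ℂ A (q.coeff 0)) := by
          rw [h1, mul_neg]
      _ = -1 := by rw [← map_mul, inv_mul_cancel₀ hc, map_one]
  · have hcomm : Commute (aeval S (-(C (q.coeff 0)⁻¹ * q.divX))) S := by
      have := (Commute.all (-(C (q.coeff 0)⁻¹ * q.divX)) X).map (aeval S)
      rwa [aeval_X] at this
    rw [hcomm.eq]
    have h1 : S * aeval S q.divX = -(algebraMap ℂ A (q.coeff 0)) :=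
      eq_neg_of_add_eq_zero_left hkey
    rw [map_neg, map_mul, aeval_C, mul_neg, neg_eq_iff_eq_neg]
    calc S * (algebraMap ℂ A (q.coeff 0)⁻¹ * aeval S q.divX)
        = algebraMap ℂ A (q.coeff 0)⁻¹ * (S * aeval S q.divX) := by
          rw [← mul_assoc, ← Algebra.commutes, mul_assoc]
      _ = -(algebraMap ℂ A (q.coeff 0)⁻¹ * algebraMap ℂ A (q.coeff 0)) := by
          rw [h1, mul_neg]
      _ = -1 := by rw [← map_mul, inv_mul_cancel₀ hc, map_one]

/-- **Jordan–Chevalley decomposition.**  If `φ` is an invertible endomorphism of a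
ℂ-vector space `W` annihilated by a nonzero polynomial `g`, then there is a unique
pair `(T_s, T_u)` of endomorphisms with `T_s * T_u = T_u * T_s = φ`, `T_s` semisimple
(every `T_s`-invariant subspace has a `T_s`-invariant complement) and `T_u` unipotent
(`T_u - id` nilpotent); moreover `T_s` and `T_u` are invertible and can be taken to be
polynomial expressions in `φ`. -/
theorem jordan_chevalley_decomposition {W : Type*} [AddCommGroup W] [Module ℂ W]
    (φ : Module.End ℂ W) (hφ : IsUnit φ) (g : ℂ[X]) (hg : g ≠ 0)
    (hgφ : Polynomial.aeval φ g = 0) :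
    (∃! p : Module.End ℂ W × Module.End ℂ W,
        p.1 * p.2 = φ ∧ p.2 * p.1 = φ ∧
        (∀ U : Submodule ℂ W, (∀ x ∈ U, p.1 x ∈ U) →
          ∃ V : Submodule ℂ W, IsCompl U V ∧ ∀ x ∈ V, p.1 x ∈ V) ∧
        IsNilpotent (p.2 - 1)) ∧
      ∃ Ts Tu : Module.End ℂ W,
        Ts * Tu = φ ∧ Tu * Ts = φ ∧
        (∀ U : Submodule ℂ W, (∀ x ∈ U, Ts x ∈ U) →
          ∃ V : Submodule ℂ W, IsCompl U V ∧ ∀ x ∈ V, Ts x ∈ V) ∧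
        IsNilpotent (Tu - 1) ∧ IsUnit Ts ∧ IsUnit Tu ∧
        (∃ ps : ℂ[X], Polynomial.aeval φ ps = Ts) ∧
        (∃ pu : ℂ[X], Polynomial.aeval φ pu = Tu) := by
  rcases subsingleton_or_nontrivial W with hW | hW
  · -- trivial case
    have hS : Subsingleton (Module.End ℂ W) := inferInstance
    have hcompl : ∀ U V : Submodule ℂ W, IsCompl U V := by
      intro U V
      have hU : U = ⊤ := by
        rw [eq_top_iff]; intro x _; rw [Subsingleton.elim x 0]; exact U.zero_mem
      have hV : V = ⊥ := by
        rw [eq_bot_iff]; intro x _; exact (Submodule.mem_bot ℂ).mpr (Subsingleton.elim x 0)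
      rw [hU, hV]; exact isCompl_top_bot
    refine ⟨⟨(φ, φ), ⟨Subsingleton.elim _ _, Subsingleton.elim _ _,
        fun U _ => ⟨⊥, hcompl U ⊥, fun x hx => by rw [Subsingleton.elim (φ x) x]; exact hx⟩,
        ⟨1, Subsingleton.elim _ _⟩⟩,
        fun y _ => Prod.ext (Subsingleton.elim _ _) (Subsingleton.elim _ _)⟩,
      φ, φ, Subsingleton.elim _ _, Subsingleton.elim _ _,
      fun U _ => ⟨⊥, hcompl U ⊥, fun x hx => by rw [Subsingleton.elim (φ x) x]; exact hx⟩,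
      ⟨1, Subsingleton.elim _ _⟩, hφ, hφ, ⟨X, aeval_X φ⟩, ⟨X, aeval_X φ⟩⟩
  · -- nontrivial case
    have hEnd : Nontrivial (Module.End ℂ W) := inferInstance
    have hint : IsIntegral ℂ φ := IsAlgebraic.isIntegral ⟨g, hg, hgφ⟩
    obtain ⟨P, k, hPsq, -, hdvd⟩ := exists_squarefree_dvd_pow_of_ne_zero (minpoly.ne_zero hint)
    have hsep : P.Separable := PerfectField.separable_iff_squarefree.mpr hPsq
    obtain ⟨n, hn_mem, s, hs_mem, hn, hs, hφeq⟩ :=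
      Module.End.exists_isNilpotent_isSemisimple_of_separable_of_dvd_pow hsep hdvd
    -- basic commutation facts
    have hcφn : Commute φ n := Algebra.commute_of_mem_adjoin_self hn_mem
    have hcφs : Commute φ s := Algebra.commute_of_mem_adjoin_self hs_mem
    have hneq : n = φ - s := by rw [hφeq]; abel
    -- s is a unit
    have hs_unit : IsUnit s := by
      have h1 : s = φ + -n := by rw [hφeq]; abel
      rw [h1]
      exact IsNilpotent.isUnit_add_left_of_commute hn.neg hφ hcφn.symm.neg_left
    -- s is integral, get polynomial inverse si
    have hsint : IsIntegral ℂ s :=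
      IsIntegral.of_mem_of_fg _ hint.fg_adjoin_singleton _ hs_mem
    obtain ⟨r, hr1, hr2⟩ := aux_inv_poly hsint hs_unit
    set si : Module.End ℂ W := aeval s r with hsidef
    have hsi_mem : si ∈ Algebra.adjoin ℂ {s} := by
      rw [Algebra.adjoin_singleton_eq_range_aeval]; exact ⟨r, rfl⟩
    -- the decomposition
    set Tu : Module.End ℂ W := si * φ with hTudef
    have hTsTu : s * Tu = φ := by rw [hTudef, ← mul_assoc, hr1, one_mul]
    have hTuTs : Tu * s = φ := by
      rw [hTudef, mul_assoc, hcφs.eq, ← mul_assoc, hr2, one_mul]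
    have hTu_nil : IsNilpotent (Tu - 1) := by
      have h1 : Tu - 1 = si * n := by
        rw [hTudef, ← hr2, hneq, mul_sub]
      rw [h1]
      have hcns : Commute n s := Algebra.commute_of_mem_adjoin_singleton_of_commute hs_mem hcφn.symm
      have hcsin : Commute si n :=
        (Algebra.commute_of_mem_adjoin_singleton_of_commute hsi_mem hcns).symm
      exact hcsin.isNilpotent_mul_left hn
    have hTu_unit : IsUnit Tu := IsUnit.mul (⟨⟨si, s, hr2, hr1⟩, rfl⟩ : IsUnit si) hφ
    obtain ⟨ps, hps⟩ : ∃ ps : ℂ[X], aeval φ ps = s := by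
      rwa [Algebra.adjoin_singleton_eq_range_aeval] at hs_mem
    have hpu : aeval φ (r.comp ps * X) = Tu := by
      rw [map_mul, aeval_comp, hps, aeval_X, hTudef]
    -- semisimplicity condition for s
    have hscond : ∀ U : Submodule ℂ W, (∀ x ∈ U, s x ∈ U) →
        ∃ V : Submodule ℂ W, IsCompl U V ∧ ∀ x ∈ V, s x ∈ V := by
      intro U hU
      obtain ⟨V, hV, hcomp⟩ := Module.End.isSemisimple_iff.mp hs U hU
      exact ⟨V, hcomp, hV⟩
    -- uniqueness
    have huniq : ∀ y : Module.End ℂ W × Module.End ℂ W,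
        (y.1 * y.2 = φ ∧ y.2 * y.1 = φ ∧
          (∀ U : Submodule ℂ W, (∀ x ∈ U, y.1 x ∈ U) →
            ∃ V : Submodule ℂ W, IsCompl U V ∧ ∀ x ∈ V, y.1 x ∈ V) ∧
          IsNilpotent (y.2 - 1)) → y = (s, Tu) := by
      rintro ⟨s₁, u₁⟩ ⟨h1, h2, h3, h4⟩
      simp only at h1 h2 h3 h4
      have hs₁ss : s₁.IsSemisimple := Module.End.isSemisimple_iff.mpr (by
        intro p hp
        obtain ⟨V, hc, hi⟩ := h3 p (fun x hx => (Module.End.mem_invtSubmodule s₁).mp hp hx)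
        exact ⟨V, (Module.End.mem_invtSubmodule s₁).mpr (fun x hx => hi x hx), hc⟩)
      have hcφs₁ : Commute φ s₁ := by
        show φ * s₁ = s₁ * φ
        nth_rewrite 1 [← h1]
        rw [mul_assoc, h2]
      have hcu₁s₁ : Commute s₁ u₁ := h1.trans h2.symm
      have hn₁eq : φ - s₁ = s₁ * (u₁ - 1) := by rw [mul_sub, mul_one, h1]
      have hn₁ : IsNilpotent (φ - s₁) := by
        rw [hn₁eq]
        exact (hcu₁s₁.sub_right (Commute.one_right s₁)).isNilpotent_mul_left h4
      obtain ⟨k₁, hk₁⟩ := h4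
      have hu₁int : IsIntegral ℂ u₁ :=
        ⟨(X - C 1) ^ k₁, (monic_X_sub_C 1).pow k₁, by
          rw [← aeval_def, map_pow, map_sub, aeval_X, aeval_C, map_one]; exact hk₁⟩
      have hu₁unit : IsUnit u₁ := by
        have h5 := IsNilpotent.isUnit_add_one ⟨k₁, hk₁⟩
        rwa [sub_add_cancel] at h5
      obtain ⟨r₁, hr₁a, hr₁b⟩ := aux_inv_poly hu₁int hu₁unit
      set w : Module.End ℂ W := aeval u₁ r₁ with hwdef
      have hw_mem : w ∈ Algebra.adjoin ℂ {u₁} := by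
        rw [Algebra.adjoin_singleton_eq_range_aeval]; exact ⟨r₁, rfl⟩
      have hs₁w : s₁ = φ * w := by
        calc s₁ = s₁ * (u₁ * w) := by rw [hr₁a, mul_one]
          _ = φ * w := by rw [← mul_assoc, h1]
      have key : ∀ v : W, s v = s₁ v := by
        intro v
        set M : Submodule ℂ (Module.End ℂ W) :=
          (Subalgebra.toSubmodule (Algebra.adjoin ℂ {φ})) *
            (Subalgebra.toSubmodule (Algebra.adjoin ℂ {u₁})) with hMdef
        have hMfg : M.FG := hint.fg_adjoin_singleton.mul hu₁int.fg_adjoin_singleton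
        have hMs : ∀ y ∈ M, s * y ∈ M := by
          intro y hy
          refine Submodule.mul_induction_on hy (fun a ha b hb => ?_) (fun x y hx hy => ?_)
          · rw [← mul_assoc]
            exact Submodule.mul_mem_mul ((Subalgebra.mem_toSubmodule _).mpr
              (mul_mem hs_mem ((Subalgebra.mem_toSubmodule _).mp ha))) hb
          · rw [mul_add]; exact M.add_mem hx hy
        have hMs₁ : ∀ y ∈ M, s₁ * y ∈ M := by
          intro y hy
          refine Submodule.mul_induction_on hy (fun a ha b hb => ?_) (fun x y hx hy => ?_)
          · have hca : Commute s₁ a :=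
              Algebra.commute_of_mem_adjoin_singleton_of_commute
                ((Subalgebra.mem_toSubmodule _).mp ha) hcφs₁.symm
            have heq : s₁ * (a * b) = (a * φ) * (w * b) := by
              rw [← mul_assoc, hca.eq, hs₁w, ← mul_assoc, mul_assoc (a * φ)]
            rw [heq]
            exact Submodule.mul_mem_mul
              ((Subalgebra.mem_toSubmodule _).mpr (mul_mem ((Subalgebra.mem_toSubmodule _).mp ha)
                (Algebra.self_mem_adjoin_singleton ℂ φ)))
              ((Subalgebra.mem_toSubmodule _).mpr (mul_mem hw_mem ((Subalgebra.mem_toSubmodule _).mp hb)))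
          · rw [mul_add]; exact M.add_mem hx hy
        let ev : Module.End ℂ W →ₗ[ℂ] W :=
          { toFun := fun f => f v
            map_add' := fun f g => rfl
            map_smul' := fun c f => rfl }
        set U : Submodule ℂ W := M.map ev with hUdef
        have h1M : (1 : Module.End ℂ W) ∈ M := by
          have h6 := Submodule.mul_mem_mul
            ((Subalgebra.mem_toSubmodule _).mpr (one_mem (Algebra.adjoin ℂ {φ})))
            ((Subalgebra.mem_toSubmodule _).mpr (one_mem (Algebra.adjoin ℂ {u₁})))
          rwa [one_mul] at h6
        have hvU : v ∈ U := ⟨1, h1M, rfl⟩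
        have hUfin : FiniteDimensional ℂ U := Module.Finite.iff_fg.mpr (hMfg.map ev)
        have hUs : ∀ x ∈ U, s x ∈ U := by
          rintro x ⟨y, hy, rfl⟩
          exact ⟨s * y, hMs y hy, rfl⟩
        have hUs₁ : ∀ x ∈ U, s₁ x ∈ U := by
          rintro x ⟨y, hy, rfl⟩
          exact ⟨s₁ * y, hMs₁ y hy, rfl⟩
        have hcss₁ : Commute s₁ s :=
          Algebra.commute_of_mem_adjoin_singleton_of_commute hs_mem hcφs₁.symm
        have hrc : Commute (s.restrict hUs) (s₁.restrict hUs₁) :=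
          LinearMap.restrict_commute hcss₁.symm hUs hUs₁
        have hrss : Module.End.IsSemisimple (s.restrict hUs) := hs.restrict hUs
        have hrss₁ : Module.End.IsSemisimple (s₁.restrict hUs₁) := hs₁ss.restrict hUs₁
        have hsubm : ∀ x ∈ U, (s - s₁) x ∈ U := fun x hx => U.sub_mem (hUs x hx) (hUs₁ x hx)
        have hDnil : IsNilpotent (s - s₁) := by
          have h5 : s - s₁ = (φ - s₁) - n := by rw [hneq]; abel
          rw [h5]
          have hcn' : Commute (φ - s₁) n :=
            hcφn.sub_left (Algebra.commute_of_mem_adjoin_singleton_of_commute hn_mem hcφs₁.symm)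
          exact hcn'.isNilpotent_sub hn₁ hn
        have hrnil : IsNilpotent ((s - s₁).restrict hsubm) :=
          Module.End.isNilpotent.restrict hsubm hDnil
        have hrD : s.restrict hUs - s₁.restrict hUs₁ = (s - s₁).restrict hsubm :=
          LinearMap.restrict_sub hUs hUs₁ hsubm
        have hrssD : Module.End.IsSemisimple ((s - s₁).restrict hsubm) := by
          rw [← hrD]
          exact Module.End.IsSemisimple.sub_of_commute hrc hrss hrss₁
        have hzero := Module.End.eq_zero_of_isNilpotent_isSemisimple hrnil hrssD
        have h7 := DFunLike.congr_fun hzero ⟨v, hvU⟩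
        have hv0 : (s - s₁) v = 0 := by
          simpa [LinearMap.restrict_apply, Subtype.ext_iff] using h7
        rw [LinearMap.sub_apply] at hv0
        exact sub_eq_zero.mp hv0
      have hseq : s₁ = s := LinearMap.ext fun v => (key v).symm
      have hueq : u₁ = Tu := by
        calc u₁ = (si * s) * u₁ := by rw [hr2, one_mul]
          _ = si * (s₁ * u₁) := by rw [mul_assoc, hseq]
          _ = Tu := by rw [h1, hTudef]
      exact Prod.ext hseq hueq
    exact ⟨⟨(s, Tu), ⟨hTsTu, hTuTs, hscond, hTu_nil⟩, huniq⟩,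
      s, Tu, hTsTu, hTuTs, hscond, hTu_nil, hs_unit, hTu_unit, ⟨ps, hps⟩, ⟨r.comp ps * X, hpu⟩⟩
end

section
/- Let W be a ℂ-vector space, φ a ℂ-linear endomorphism of W, and α ∈ ℂ such that φ − α•id_W is nilpotent. Let W_∞ = ⨁_{i∈ℕ} W (writing w·e_i for the element w placed in the i-th summand, with the convention e_{−1} = 0), and let φ_∞ be the unique ℂ-linear endomorphism of W_∞ with φ_∞(w·e_i) = ((φ − α)w)·e_i + w·e_{i−1}. Then: (a) φ_∞ is surjective; and (b) the ℂ-linear map W → W_∞ sending w to ∑_{i ≥ 0} (−1)^i ((φ − α)^i w)·e_i (a finite sum, by nilpotency) is injective with image exactly ker(φ_∞); in particular ker(φ_∞) ≅ W. -/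
/-- Let `φ` be an endomorphism of a ℂ-vector space `W` with `φ - α • id` nilpotent
(say `(φ - α • id)^n = 0`).  On `W_∞ = ⨁_{i ∈ ℕ} W` (realized as `ℕ →₀ W`, with
`w·e_i = Finsupp.single i w`), let `Φ = φ_∞` be the linear endomorphism determined by
`φ_∞(w·e_i) = ((φ - α)w)·e_i + w·e_{i-1}` (with `e_{-1} = 0`).  Then `φ_∞` is
surjective, and `w ↦ ∑_{i} (-1)^i ((φ - α)^i w)·e_i` is an injective linear map
whose range is exactly `ker φ_∞`; in particular `ker φ_∞ ≅ W`. -/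
theorem surjective_and_ker_of_infinite_jordan {W : Type*} [AddCommGroup W] [Module ℂ W]
    (φ : Module.End ℂ W) (α : ℂ) (n : ℕ) (hn : (φ - α • 1) ^ n = 0)
    (Φ : (ℕ →₀ W) →ₗ[ℂ] (ℕ →₀ W))
    (hΦ0 : ∀ w : W, Φ (Finsupp.single 0 w) = Finsupp.single 0 ((φ - α • 1) w))
    (hΦ : ∀ (i : ℕ) (w : W),
      Φ (Finsupp.single (i + 1) w) =
        Finsupp.single (i + 1) ((φ - α • 1) w) + Finsupp.single i w) :
    Function.Surjective Φ ∧
      Function.Injective (fun w : W =>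
        ∑ i ∈ Finset.range n, Finsupp.single i ((-1 : ℂ) ^ i • ((φ - α • 1) ^ i) w)) ∧
      Set.range (fun w : W =>
          ∑ i ∈ Finset.range n, Finsupp.single i ((-1 : ℂ) ^ i • ((φ - α • 1) ^ i) w)) =
        (LinearMap.ker Φ : Set (ℕ →₀ W)) := by
  set ψ : Module.End ℂ W := φ - α • 1 with hψ
  -- coordinate formula for Φ
  have hA : ∀ (x : ℕ →₀ W) (k : ℕ), Φ x k = ψ (x k) + x (k + 1) := by
    intro x
    induction x using Finsupp.induction_linear with
    | zero => simp
    | add a b ha hb => intro k; simp [ha, hb]; abel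
    | single j w =>
      intro k
      match j with
      | 0 =>
        rw [hΦ0]
        simp only [Finsupp.single_apply]
        split_ifs <;> simp_all
      | j + 1 =>
        rw [hΦ j]
        simp only [Finsupp.add_apply, Finsupp.single_apply]
        split_ifs <;> simp_all
  -- evaluation of the candidate kernel map
  have hB : ∀ (w : W) (k : ℕ),
      (∑ i ∈ Finset.range n, Finsupp.single i ((-1 : ℂ) ^ i • (ψ ^ i) w)) k
        = if k < n then (-1 : ℂ) ^ k • (ψ ^ k) w else 0 := by
    intro w k
    rw [Finsupp.finset_sum_apply]
    simp only [Finsupp.single_apply]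
    rw [Finset.sum_ite_eq' (Finset.range n) k]
    simp
  -- key sign identity
  have hC : ∀ (j : ℕ) (w : W),
      ψ ((-1:ℂ)^j • (ψ ^ j) w) + (-1:ℂ)^(j+1) • (ψ ^ (j+1)) w = 0 := by
    intro j w
    rw [map_smul, pow_succ, pow_succ']
    simp [Module.End.mul_apply]
  -- vanishing for k ≥ n
  have hD : ∀ (k : ℕ), n ≤ k → ∀ w : W, (ψ ^ k) w = 0 := by
    intro k hk w
    have h : ψ ^ k = ψ ^ (k - n) * ψ ^ n := by rw [← pow_add]; congr 1; omega
    rw [h, Module.End.mul_apply, hn]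
    simp
  rcases Nat.eq_zero_or_pos n with rfl | hpos
  · -- trivial case : W is the zero space
    have hW : ∀ w : W, w = 0 := by
      intro w
      have h1 : (1 : Module.End ℂ W) = 0 := by simpa using hn
      calc w = (1 : Module.End ℂ W) w := rfl
        _ = (0 : Module.End ℂ W) w := by rw [h1]
        _ = 0 := rfl
    have hX : ∀ x : ℕ →₀ W, x = 0 := by
      intro x; ext k; exact hW _
    refine ⟨fun y => ⟨0, by rw [map_zero, hX y]⟩, fun a b _ => by rw [hW a, hW b], ?_⟩
    ext x
    simp only [Finset.range_zero, Finset.sum_empty, Set.mem_range, SetLike.mem_coe,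
      LinearMap.mem_ker]
    constructor
    · rintro ⟨w, rfl⟩; exact map_zero Φ
    · intro _; exact ⟨0, (hX x).symm⟩
  · refine ⟨?_, ?_, ?_⟩
    · -- surjectivity
      intro y
      induction y using Finsupp.induction_linear with
      | zero => exact ⟨0, map_zero Φ⟩
      | add a b ha hb =>
        obtain ⟨u, hu⟩ := ha; obtain ⟨v, hv⟩ := hb
        exact ⟨u + v, by rw [map_add, hu, hv]⟩
      | single i w =>
        refine ⟨∑ j ∈ Finset.range n, Finsupp.single (i + j + 1) ((-1:ℂ)^j • (ψ ^ j) w), ?_⟩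
        obtain ⟨m, rfl⟩ := Nat.exists_eq_succ_of_ne_zero (by omega : n ≠ 0)
        rw [map_sum]
        have hterm : ∀ j, Φ (Finsupp.single (i + j + 1) ((-1:ℂ)^j • (ψ ^ j) w))
            = Finsupp.single (i + j + 1) (ψ ((-1:ℂ)^j • (ψ ^ j) w))
              + Finsupp.single (i + j) ((-1:ℂ)^j • (ψ ^ j) w) := fun j => hΦ (i + j) _
        simp only [hterm]
        rw [Finset.sum_add_distrib, Finset.sum_range_succ, Finset.sum_range_succ']
        have hlast : ψ ((-1:ℂ)^m • (ψ ^ m) w) = 0 := by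
          rw [map_smul]
          have h2 : ψ ((ψ ^ m) w) = (ψ ^ (m+1)) w := by rw [pow_succ']; rfl
          rw [h2, hn]; simp
        have key : (∑ j ∈ Finset.range m, Finsupp.single (i + j + 1) (ψ ((-1:ℂ)^j • (ψ ^ j) w)))
            + ∑ j ∈ Finset.range m, Finsupp.single (i + (j + 1)) ((-1:ℂ)^(j+1) • (ψ ^ (j+1)) w)
            = 0 := by
          rw [← Finset.sum_add_distrib]
          apply Finset.sum_eq_zero
          intro j _
          have he : i + (j + 1) = i + j + 1 := by omega
          rw [he, ← Finsupp.single_add, hC j w, Finsupp.single_zero]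
        rw [hlast, Finsupp.single_zero, add_zero]
        rw [show (∀ a b c : ℕ →₀ W, a + (b + c) = (a + b) + c) from fun a b c => (add_assoc a b c).symm]
        rw [key, zero_add]
        simp
    · -- injectivity
      intro a b hab
      have h0 := congrArg (fun y : ℕ →₀ W => y 0) hab
      simp only at h0
      rw [hB, hB] at h0
      simpa [hpos] using h0
    · -- range = kernel
      ext x
      simp only [Set.mem_range, SetLike.mem_coe, LinearMap.mem_ker]
      constructor
      · rintro ⟨w, rfl⟩
        ext k
        rw [hA, hB, hB]
        simp only [Finsupp.coe_zero, Pi.zero_apply]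
        split_ifs with h1 h2
        · exact hC k w
        · have h3 : ψ ((ψ ^ k) w) = (ψ ^ (k+1)) w := by rw [pow_succ']; rfl
          rw [map_smul, h3, hD (k+1) (by omega), smul_zero, add_zero]
        · omega
        · simp
      · intro hx
        have h0 : ∀ k, ψ (x k) + x (k + 1) = 0 := by
          intro k
          have := congrArg (fun y : ℕ →₀ W => y k) hx
          simpa [hA] using this
        have hxk : ∀ k, x k = (-1:ℂ)^k • (ψ ^ k) (x 0) := by
          intro k
          induction k with
          | zero => simp
          | succ k ih =>
            have e1 := h0 k
            rw [ih] at e1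
            exact add_left_cancel (e1.trans (hC k (x 0)).symm)
        refine ⟨x 0, ?_⟩
        ext k
        rw [hB]
        split_ifs with h
        · exact (hxk k).symm
        · rw [hxk k, hD k (by omega), smul_zero]
end

section
/- Let λ ∈ ℂ with λ ≠ 0 and let m ≥ 1. Let V = ℂ[X]/((X−λ)^m) and let μ_λ denote the (bijective) multiplication-by-X ℂ-linear endomorphism of V; similarly let μ_{λ⁻¹} denote multiplication by X on ℂ[X]/((X−λ⁻¹)^m). Then there is a ℂ-linear equivalence e : V* ≃ ℂ[X]/((X−λ⁻¹)^m) from the dual space V* = Hom_ℂ(V, ℂ) such that e ∘ (μ_λ)ᵗ = (μ_{λ⁻¹})⁻¹ ∘ e, where (μ_λ)ᵗ is the transpose of μ_λ acting on V*. In other words, the dual of the local system L_{(X−λ)^m} is isomorphic to L_{(X−λ⁻¹)^m}, with the induced action on the dual corresponding to the inverse of the monodromy of L_{(X−λ⁻¹)^m}. -/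
open Polynomial

/-- The root of `(X - C lam)^m` in `AdjoinRoot` is a unit when `lam ≠ 0`. -/
lemma jordan_root_isUnit (lam : ℂ) (hlam : lam ≠ 0) (m : ℕ) :
    IsUnit (AdjoinRoot.root ((X - C lam) ^ m)) := by
  have hnil : IsNilpotent
      (AdjoinRoot.root ((X - C lam) ^ m) - algebraMap ℂ _ lam) := by
    refine ⟨m, ?_⟩
    have h : (AdjoinRoot.root ((X - C lam) ^ m) - algebraMap ℂ _ lam) ^ m
        = AdjoinRoot.mk ((X - C lam) ^ m) ((X - C lam) ^ m) := by
      rw [map_pow, map_sub, AdjoinRoot.mk_X, AdjoinRoot.mk_C, AdjoinRoot.algebraMap_eq]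
    rw [h, AdjoinRoot.mk_self]
  have hu : IsUnit (algebraMap ℂ (AdjoinRoot ((X - C lam) ^ m)) lam) :=
    (isUnit_iff_ne_zero.mpr hlam).map _
  have := hnil.isUnit_add_right_of_commute hu (Commute.all _ _)
  simpa using this

/-- If `x * v = 1` where `x` is the root of `(X - C lam)^m` and `lam * mu = 1`,
then `v` is a root of `(X - C mu)^m`. -/
lemma jordan_aeval_inv (lam mu : ℂ) (hmu : lam * mu = 1) (m : ℕ)
    (v : AdjoinRoot ((X - C lam) ^ m))
    (hv : AdjoinRoot.root ((X - C lam) ^ m) * v = 1) :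
    aeval v ((X - C mu) ^ m) = 0 := by
  have hcc' : (algebraMap ℂ (AdjoinRoot ((X - C lam) ^ m)) lam) *
      (algebraMap ℂ (AdjoinRoot ((X - C lam) ^ m)) mu) = 1 := by
    rw [← map_mul, hmu, map_one]
  set x : AdjoinRoot ((X - C lam) ^ m) := AdjoinRoot.root ((X - C lam) ^ m) with hxdef
  set c : AdjoinRoot ((X - C lam) ^ m) := algebraMap ℂ _ lam with hcdef
  set c' : AdjoinRoot ((X - C lam) ^ m) := algebraMap ℂ _ mu with hc'def
  have hxc : (x - c) ^ m = 0 := by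
    have h : (x - c) ^ m = AdjoinRoot.mk ((X - C lam) ^ m) ((X - C lam) ^ m) := by
      rw [hxdef, hcdef, map_pow, map_sub, AdjoinRoot.mk_X, AdjoinRoot.mk_C,
        AdjoinRoot.algebraMap_eq]
    rw [h, AdjoinRoot.mk_self]
  have key : v - c' = (c' * v) * (c - x) := by
    linear_combination c' * hv + (-v) * hcc'
  have h2 : (v - c') ^ m = 0 := by
    rw [key, mul_pow, ← neg_sub x c, neg_pow, hxc, mul_zero, mul_zero]
  rw [map_pow, map_sub, aeval_X, aeval_C, ← hc'def, h2]

/-- The "inversion" algebra map `ℂ[X]/((X-μ)^m) → ℂ[X]/((X-λ)^m)` sending the class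
of `X` to the inverse of the class of `X`, for `λ * μ = 1`. -/
noncomputable def jordanInv (lam mu : ℂ) (hmu : lam * mu = 1) (m : ℕ) :
    AdjoinRoot ((X - C mu) ^ m) →ₐ[ℂ] AdjoinRoot ((X - C lam) ^ m) :=
  AdjoinRoot.liftAlgHom _ (Algebra.ofId ℂ _) ↑(jordan_root_isUnit lam (left_ne_zero_of_mul_eq_one hmu) m).unit⁻¹
    (by
      have h := jordan_aeval_inv lam mu hmu m _
        ((jordan_root_isUnit lam (left_ne_zero_of_mul_eq_one hmu) m).mul_val_inv)
      rw [aeval_def] at h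
      convert h using 2
      rfl)

lemma jordanInv_root_mul (lam mu : ℂ) (hmu : lam * mu = 1) (m : ℕ) :
    AdjoinRoot.root ((X - C lam) ^ m) *
      jordanInv lam mu hmu m (AdjoinRoot.root ((X - C mu) ^ m)) = 1 := by
  rw [jordanInv, AdjoinRoot.liftAlgHom_root]
  exact (jordan_root_isUnit lam (left_ne_zero_of_mul_eq_one hmu) m).mul_val_inv

/-- The inversion map sends the inverse of the root back to the root. -/
lemma jordanInv_of_inv (lam mu : ℂ) (hmu : lam * mu = 1) (m : ℕ)
    (w : AdjoinRoot ((X - C mu) ^ m))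
    (hw : AdjoinRoot.root ((X - C mu) ^ m) * w = 1) :
    jordanInv lam mu hmu m w = AdjoinRoot.root ((X - C lam) ^ m) := by
  set ι := jordanInv lam mu hmu m
  set x := AdjoinRoot.root ((X - C lam) ^ m)
  set y := AdjoinRoot.root ((X - C mu) ^ m)
  have h1 : x * ι y = 1 := jordanInv_root_mul lam mu hmu m
  have h2 : ι y * ι w = 1 := by rw [← map_mul, hw, map_one]
  calc ι w = (x * ι y) * ι w := by rw [h1, one_mul]
    _ = x * (ι y * ι w) := by ring
    _ = x := by rw [h2, mul_one]

lemma jordanInv_bijective (lam mu : ℂ) (hmu : lam * mu = 1) (m : ℕ) :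
    Function.Bijective (jordanInv lam mu hmu m) := by
  have hmu' : mu * lam = 1 := by rw [mul_comm]; exact hmu
  set ι := jordanInv lam mu hmu m
  set κ := jordanInv mu lam hmu' m
  have hικ : ι.comp κ = AlgHom.id ℂ _ := by
    apply AdjoinRoot.algHom_ext
    rw [AlgHom.comp_apply, AlgHom.id_apply]
    exact jordanInv_of_inv lam mu hmu m _ (jordanInv_root_mul mu lam hmu' m)
  have hκι : κ.comp ι = AlgHom.id ℂ _ := by
    apply AdjoinRoot.algHom_ext
    rw [AlgHom.comp_apply, AlgHom.id_apply]
    exact jordanInv_of_inv mu lam hmu' m _ (jordanInv_root_mul lam mu hmu m)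
  refine Function.bijective_iff_has_inverse.mpr ⟨κ, fun a => ?_, fun a => ?_⟩
  · exact DFunLike.congr_fun hκι a
  · exact DFunLike.congr_fun hικ a

set_option maxHeartbeats 1000000 in
set_option synthInstance.maxHeartbeats 400000 in
/-- **Duality for the Jordan-block local systems on `ℂ*`.**  For `λ ≠ 0` and `m ≥ 1`,
the dual of `V = ℂ[X]/((X-λ)^m)` (with monodromy `μ_λ` = multiplication by `X`) is
isomorphic to `ℂ[X]/((X-λ⁻¹)^m)`, and under this isomorphism the transpose action
`(μ_λ)ᵗ` on the dual corresponds to the inverse of the monodromy `μ_{λ⁻¹}`: there is a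
ℂ-linear equivalence `e` with `μ_{λ⁻¹} ∘ e ∘ (μ_λ)ᵗ = e`, i.e.
`e ∘ (μ_λ)ᵗ = (μ_{λ⁻¹})⁻¹ ∘ e`. -/
theorem dual_of_jordan_local_system (lam : ℂ) (hlam : lam ≠ 0) (m : ℕ) (hm : 1 ≤ m) :
    ∃ e : Module.Dual ℂ (ℂ[X] ⧸ Ideal.span {(X - C lam) ^ m}) ≃ₗ[ℂ]
        (ℂ[X] ⧸ Ideal.span {(X - C lam⁻¹) ^ m}),
      ∀ f : Module.Dual ℂ (ℂ[X] ⧸ Ideal.span {(X - C lam) ^ m}),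
        Ideal.Quotient.mk (Ideal.span {(X - C lam⁻¹) ^ m}) X *
            e ((LinearMap.mulLeft ℂ
                (Ideal.Quotient.mk (Ideal.span {(X - C lam) ^ m}) X)).dualMap f) =
          e f := by
  classical
  have hlam' : lam⁻¹ ≠ 0 := inv_ne_zero hlam
  have hpm : ((X - C lam) ^ m).Monic := (monic_X_sub_C lam).pow m
  have hqm : ((X - C lam⁻¹) ^ m).Monic := (monic_X_sub_C lam⁻¹).pow m
  have hp0 : ((X - C lam) ^ m) ≠ 0 := hpm.ne_zero
  have hq0 : ((X - C lam⁻¹) ^ m) ≠ 0 := hqm.ne_zero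
  have hpnd : ((X - C lam) ^ m).natDegree = m := by
    rw [natDegree_pow, natDegree_X_sub_C, mul_one]
  have hqnd : ((X - C lam⁻¹) ^ m).natDegree = m := by
    rw [natDegree_pow, natDegree_X_sub_C, mul_one]
  -- the linear functional "coefficient of X^(m-1)"
  set ℓ : AdjoinRoot ((X - C lam) ^ m) →ₗ[ℂ] ℂ :=
    (Polynomial.lcoeff ℂ (m - 1)).comp (AdjoinRoot.modByMonicHom hpm) with hℓdef
  -- nondegeneracy of (a, c) ↦ ℓ (a * c)
  have hnd : ∀ c : AdjoinRoot ((X - C lam) ^ m),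
      (∀ a : AdjoinRoot ((X - C lam) ^ m), ℓ (a * c) = 0) → c = 0 := by
    intro c hc
    by_contra hc0
    set qc := AdjoinRoot.modByMonicHom hpm c with hqcdef
    have hmkqc : AdjoinRoot.mk _ qc = c := AdjoinRoot.mk_leftInverse hpm c
    have hqc0 : qc ≠ 0 := fun h => hc0 (by rw [← hmkqc, h, map_zero])
    have hdeglt : qc.natDegree < m := by
      obtain ⟨r, rfl⟩ := Ideal.Quotient.mk_surjective c
      have : qc = r %ₘ ((X - C lam) ^ m) := AdjoinRoot.modByMonicHom_mk hpm r
      rw [this] at hqc0 ⊢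
      have := Polynomial.degree_modByMonic_lt r hpm
      have h2 := Polynomial.natDegree_lt_natDegree hqc0 this
      rwa [hpnd] at h2
    set k := m - 1 - qc.natDegree with hkdef
    have hsum : qc.natDegree + k = m - 1 := by omega
    have hcontra := hc (AdjoinRoot.mk _ (X ^ k))
    have hmul : AdjoinRoot.mk ((X - C lam) ^ m) (X ^ k) * c
        = AdjoinRoot.mk _ (X ^ k * qc) := by
      rw [← hmkqc, ← map_mul]
    have hXk0 : (X : ℂ[X]) ^ k * qc ≠ 0 := mul_ne_zero (pow_ne_zero _ X_ne_zero) hqc0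
    have hdeg2 : (X ^ k * qc).degree < ((X - C lam) ^ m).degree := by
      rw [Polynomial.degree_eq_natDegree hXk0, Polynomial.degree_eq_natDegree hp0,
        hpnd, natDegree_mul (pow_ne_zero _ X_ne_zero) hqc0, natDegree_X_pow]
      exact_mod_cast by omega
    rw [hmul, hℓdef, LinearMap.comp_apply, AdjoinRoot.modByMonicHom_mk,
      (Polynomial.modByMonic_eq_self_iff hpm).mpr hdeg2] at hcontra
    have : (X ^ k * qc).coeff (m - 1) = qc.leadingCoeff := by
      rw [← hsum, Polynomial.coeff_X_pow_mul qc k qc.natDegree]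
      rfl
    rw [Polynomial.lcoeff_apply, this] at hcontra
    exact hqc0 (Polynomial.leadingCoeff_eq_zero.mp hcontra)
  -- the inversion algebra map
  set ι : AdjoinRoot ((X - C lam⁻¹) ^ m) →ₐ[ℂ] AdjoinRoot ((X - C lam) ^ m) :=
    jordanInv lam lam⁻¹ (mul_inv_cancel₀ hlam) m with hιdef
  have hιbij : Function.Bijective ι := jordanInv_bijective lam lam⁻¹ (mul_inv_cancel₀ hlam) m
  -- the pairing map ε : W →ₗ Dual V
  set ε : AdjoinRoot ((X - C lam⁻¹) ^ m) →ₗ[ℂ]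
      Module.Dual ℂ (AdjoinRoot ((X - C lam) ^ m)) :=
    { toFun := fun b => ℓ ∘ₗ LinearMap.mulLeft ℂ (ι b)
      map_add' := by
        intro b₁ b₂
        ext a
        simp [add_mul, mul_add, map_add]
      map_smul' := by
        intro s b
        ext a
        simp [smul_mul_assoc, mul_smul_comm, map_smul] } with hεdef
  have hεapp : ∀ b a, ε b a = ℓ (ι b * a) := fun b a => rfl
  -- ε is bijective
  have hεinj : Function.Injective ε := by
    rw [injective_iff_map_eq_zero]
    intro b hb
    have hιb : ι b = 0 := by
      apply hnd
      intro a
      have := congrArg (fun g => g a) hb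
      simpa [hεapp, mul_comm] using this
    have h0 : ι b = ι 0 := by rw [hιb, map_zero]
    exact hιbij.injective h0
  haveI : FiniteDimensional ℂ (AdjoinRoot ((X - C lam) ^ m)) :=
    Module.Finite.of_basis (AdjoinRoot.powerBasis hp0).basis
  haveI : FiniteDimensional ℂ (AdjoinRoot ((X - C lam⁻¹) ^ m)) :=
    Module.Finite.of_basis (AdjoinRoot.powerBasis hq0).basis
  have hrank : Module.finrank ℂ (AdjoinRoot ((X - C lam⁻¹) ^ m))
      = Module.finrank ℂ (Module.Dual ℂ (AdjoinRoot ((X - C lam) ^ m))) := by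
    rw [Subspace.dual_finrank_eq, (AdjoinRoot.powerBasis hp0).finrank,
      (AdjoinRoot.powerBasis hq0).finrank]
    simp [AdjoinRoot.powerBasis, hpnd, hqnd]
  have hεbij : Function.Bijective ε :=
    ⟨hεinj, (LinearMap.injective_iff_surjective_of_finrank_eq_finrank (f := ε) hrank).mp hεinj⟩
  set E := LinearEquiv.ofBijective ε hεbij with hEdef
  refine ⟨E.symm, ?_⟩
  intro f
  set y : AdjoinRoot ((X - C lam⁻¹) ^ m) := AdjoinRoot.root ((X - C lam⁻¹) ^ m) with hydef
  set x : AdjoinRoot ((X - C lam) ^ m) := AdjoinRoot.root ((X - C lam) ^ m) with hxdef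
  have hyx : x * ι y = 1 := jordanInv_root_mul lam lam⁻¹ (mul_inv_cancel₀ hlam) m
  have hmu' : lam⁻¹ * lam = 1 := inv_mul_cancel₀ hlam
  set v : AdjoinRoot ((X - C lam⁻¹) ^ m) := jordanInv lam⁻¹ lam hmu' m x with hvdef
  have hyv : y * v = 1 := jordanInv_root_mul lam⁻¹ lam hmu' m
  have hιv : ι v = x := jordanInv_of_inv lam lam⁻¹ (mul_inv_cancel₀ hlam) m v hyv
  set b := E.symm f with hbdef
  have hfb : f = ε b := (E.apply_symm_apply f).symm
  have hkey : (LinearMap.mulLeft ℂ x).dualMap f = ε (v * b) := by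
    ext a
    show f (LinearMap.mulLeft ℂ x a) = ε (v * b) a
    rw [hfb]
    show ε b (LinearMap.mulLeft ℂ x a) = ε (v * b) a
    rw [LinearMap.mulLeft_apply, hεapp, hεapp]
    have hmm : ι (v * b) = ι v * ι b := map_mul ι v b
    rw [hmm, hιv]
    exact congrArg ℓ (by ring)
  have hsymm : E.symm (ε (v * b)) = v * b := by
    have : ε (v * b) = E (v * b) := rfl
    rw [this, E.symm_apply_apply]
  show y * E.symm ((LinearMap.mulLeft ℂ x).dualMap f) = E.symm f
  rw [hkey, hsymm, ← mul_assoc, hyv, one_mul]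
end
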